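/- arXiv:1904.02974 — 4 statements merged into one kernel-verified Lean document; each statement's English description precedes it below -/
import Mathlib

section
/- Let a ∈ ℂ \ {0}, let h(z) = 1 + az ∈ A², and let M = [h]_{M_{z²}} be the smallest closed subspace of the Bergman space A² that contains h and is invariant under multiplication by z². Then h is orthogonal in A² to the closure of z²M, and consequently M = [M ⊖ z²M]_{M_{z²}}. -/
open MeasureTheory

/-- The measure on `ℕ` giving the singleton `{n}` mass `(n+1)^α`. -/
noncomputable def dirichletMeasure (α : ℝ) : Measure ℕ :=
  Measure.count.withDensity (fun n => ENNReal.ofReal ((n + 1 : ℝ) ^ α))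

attribute [irreducible] dirichletMeasure

/-- The Dirichlet-type space `D_α`, realized as the weighted `ℓ²` space of Taylor
coefficients: `‖f‖_α² = ∑ |a_n|² (n+1)^α`.  `α = -1` is the Bergman space `A²`,
`α = 0` is the Hardy space `H²`. -/
noncomputable abbrev Dspace (α : ℝ) : Type := Lp ℂ 2 (dirichletMeasure α)

/-- `T` acts on `D_α` as multiplication by `z^k`, i.e. as the `k`-step coefficient shift. -/
def IsShiftBy (α : ℝ) (k : ℕ) (T : Dspace α →L[ℂ] Dspace α) : Prop :=
  ∀ f : Dspace α, ∀ n : ℕ, (T f : ℕ → ℂ) n = if k ≤ n then (f : ℕ → ℂ) (n - k) else 0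

/-- `[E]_T`: the smallest closed `T`-invariant subspace containing the set `E`. -/
def invGen {H : Type*} [NormedAddCommGroup H] [InnerProductSpace ℂ H]
    (T : H →L[ℂ] H) (E : Set H) : Submodule ℂ H :=
  sInf {N : Submodule ℂ H | IsClosed (N : Set H) ∧ (∀ x ∈ N, T x ∈ N) ∧ E ⊆ N}

/-- `M ⊖ TM`: the orthogonal complement in `M` of (the closure of) `T M`. -/
noncomputable def wanderingPart {H : Type*} [NormedAddCommGroup H] [InnerProductSpace ℂ H]
    (T : H →L[ℂ] H) (M : Submodule ℂ H) : Submodule ℂ H :=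
  M ⊓ (Submodule.map (↑T : H →ₗ[ℂ] H) M)ᗮ

section auxinv

variable {H : Type*} [NormedAddCommGroup H] [InnerProductSpace ℂ H]
  (T : H →L[ℂ] H) (E : Set H)

lemma invGen_isClosed : IsClosed ((invGen T E : Submodule ℂ H) : Set H) := by
  rw [invGen, Submodule.coe_sInf]
  exact isClosed_biInter fun p hp => hp.1

lemma invGen_mapsTo {x : H} (hx : x ∈ invGen T E) : T x ∈ invGen T E := by
  rw [invGen, Submodule.mem_sInf] at hx ⊢
  exact fun p hp => hp.2.1 x (hx p hp)

lemma subset_invGen : E ⊆ (invGen T E : Submodule ℂ H) := by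
  intro x hx
  simp only [invGen, SetLike.mem_coe, Submodule.mem_sInf]
  exact fun p hp => hp.2.2 hx

lemma invGen_le {N : Submodule ℂ H} (hc : IsClosed (N : Set H))
    (hi : ∀ x ∈ N, T x ∈ N) (hs : E ⊆ N) : invGen T E ≤ N :=
  sInf_le ⟨hc, hi, hs⟩

end auxinv

/-- For `a ≠ 0`, `h(z) = 1 + az ∈ A²`, and `M = [h]_{M_{z²}}` the smallest closed
`z²`-invariant subspace containing `h`, the function `h` is orthogonal to (the closure
of) `z²M`, and consequently `M = [M ⊖ z²M]_{M_{z²}}`. -/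
theorem generated_by_one_plus_az_is_wandering_generated
    (a : ℂ) (ha : a ≠ 0) (h : Dspace (-1))
    (hcoeff : ∀ n : ℕ, (h : ℕ → ℂ) n = if n = 0 then 1 else if n = 1 then a else 0)
    (T2 : Dspace (-1) →L[ℂ] Dspace (-1)) (hT2 : IsShiftBy (-1) 2 T2)
    (M : Submodule ℂ (Dspace (-1))) (hM : M = invGen T2 {h}) :
    h ∈ (Submodule.map (↑T2 : Dspace (-1) →ₗ[ℂ] Dspace (-1)) M)ᗮ ∧
      M = invGen T2 ↑(wanderingPart T2 M) := by
  have horth : h ∈ (Submodule.map (↑T2 : Dspace (-1) →ₗ[ℂ] Dspace (-1)) M)ᗮ := by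
    rw [Submodule.mem_orthogonal]
    rintro u ⟨f, hf, rfl⟩
    have hzero : ∀ n : ℕ,
        (inner ℂ ((T2 f : ℕ → ℂ) n) ((h : ℕ → ℂ) n) : ℂ) = 0 := by
      intro n
      rw [hT2 f n, hcoeff n]
      match n with
      | 0 => simp
      | 1 => simp
      | (m + 2) => simp
    calc (inner ℂ (T2 f) h : ℂ)
        = ∫ n, (inner ℂ ((T2 f : ℕ → ℂ) n) ((h : ℕ → ℂ) n) : ℂ)
            ∂(dirichletMeasure (-1)) := MeasureTheory.L2.inner_def _ _
      _ = ∫ _n, (0 : ℂ) ∂(dirichletMeasure (-1)) := by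
            exact integral_congr_ae (Filter.Eventually.of_forall hzero)
      _ = 0 := integral_zero _ _
  refine ⟨horth, ?_⟩
  have hmem : h ∈ M := hM ▸ subset_invGen T2 {h} rfl
  have hW : h ∈ wanderingPart T2 M := ⟨hmem, horth⟩
  have hWsub : (↑(wanderingPart T2 M) : Set (Dspace (-1))) ⊆ M := fun x hx => hx.1
  apply le_antisymm
  · refine hM.le.trans (invGen_le T2 {h} (invGen_isClosed T2 _)
      (fun x hx => invGen_mapsTo T2 _ hx) ?_)
    exact Set.singleton_subset_iff.mpr (subset_invGen T2 _ hW)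
  · exact invGen_le T2 _ (hM ▸ invGen_isClosed T2 {h})
      (fun x hx => hM ▸ invGen_mapsTo T2 {h} (hM ▸ hx)) hWsub
end

section
/- Let B be a finite Blaschke product and let α ∈ ℝ. Then B is a multiplier of D_α: for every f ∈ D_α the product Bf belongs to D_α, and the multiplication operator M_B : f ↦ Bf is bounded on D_α. -/
open MeasureTheory

/-- The analytic function attached to a coefficient sequence: `z ↦ ∑ aₙ zⁿ`. -/
noncomputable def seriesFn (a : ℕ → ℂ) (z : ℂ) : ℂ := ∑' n, a n * z ^ n

/-- `B` is a finite Blaschke product: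
`B(z) = e^{iθ} ∏_{i=1}^N (z - αᵢ)/(1 - conj(αᵢ) z)` with `N ≥ 1` and `αᵢ ∈ 𝔻`. -/
def IsFiniteBlaschke (B : ℂ → ℂ) : Prop :=
  ∃ (θ : ℝ) (N : ℕ) (a : Fin N → ℂ), 0 < N ∧ (∀ i, a i ∈ Metric.ball (0 : ℂ) 1) ∧
    ∀ z : ℂ, B z = Complex.exp (θ * Complex.I) *
      ∏ i, (z - a i) / (1 - (starRingEnd ℂ) (a i) * z)

/-- `T` acts on `D_α` as multiplication by the function `B`. -/
def IsMultiplicationBy (α : ℝ) (B : ℂ → ℂ) (T : Dspace α →L[ℂ] Dspace α) : Prop :=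
  ∀ f : Dspace α, ∀ z ∈ Metric.ball (0 : ℂ) 1,
    seriesFn (T f) z = B z * seriesFn f z

noncomputable def w (α : ℝ) (n : ℕ) : ENNReal := ENNReal.ofReal ((n + 1 : ℝ) ^ α)

lemma dm_lintegral (α : ℝ) (g : ℕ → ENNReal) :
    ∫⁻ n, g n ∂(dirichletMeasure α) = ∑' n, g n * w α n := by
  rw [dirichletMeasure, lintegral_withDensity_eq_lintegral_mul _ (by measurability) (by measurability)]
  rw [MeasureTheory.lintegral_count]
  simp [w, mul_comm]

lemma dm_singleton (α : ℝ) (n : ℕ) : (dirichletMeasure α) {n} ≠ 0 := by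
  rw [dirichletMeasure, MeasureTheory.withDensity_apply _ (measurableSet_singleton n),
    MeasureTheory.lintegral_singleton, Measure.count_singleton]
  simp only [mul_one]
  positivity

lemma dm_ae_eq {α : ℝ} {f g : ℕ → ℂ} (h : f =ᵐ[dirichletMeasure α] g) : f = g := by
  funext n
  by_contra hn
  have h1 : {n} ⊆ {m | f m ≠ g m} := by simp [hn]
  have := (measure_mono h1).trans_eq h
  exact dm_singleton α n (le_antisymm this bot_le)

lemma dm_eLpNorm (α : ℝ) (f : ℕ → ℂ) :
    eLpNorm f 2 (dirichletMeasure α) = (∑' n, (‖f n‖₊ : ENNReal) ^ 2 * w α n) ^ (1/2 : ℝ) := by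
  rw [eLpNorm_eq_lintegral_rpow_enorm_toReal (by norm_num) (by norm_num), dm_lintegral]
  have : ((2:ENNReal)).toReal = 2 := by norm_num
  rw [this]
  congr 1
  apply tsum_congr; intro n
  rw [← ENNReal.rpow_natCast]
  norm_num
  rfl

lemma weight_shift (α : ℝ) (k m : ℕ) :
    w α (m + k) ≤ ENNReal.ofReal ((k + 1 : ℝ) ^ |α|) * w α m := by
  rw [w, w, ← ENNReal.ofReal_mul (by positivity)]
  apply ENNReal.ofReal_le_ofReal
  push_cast
  have hm : (0:ℝ) < m + 1 := by positivity
  have hk : (1:ℝ) ≤ k + 1 := by norm_num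
  rcases le_or_gt 0 α with hα | hα
  · rw [abs_of_nonneg hα]
    calc ((m:ℝ) + k + 1) ^ α ≤ (((k:ℝ)+1) * ((m:ℝ)+1)) ^ α := by
          apply Real.rpow_le_rpow (by positivity) (by nlinarith) hα
      _ = ((k:ℝ)+1) ^ α * ((m:ℝ)+1) ^ α := Real.mul_rpow (by positivity) (by positivity)
  · rw [abs_of_neg hα]
    have h1 : ((m:ℝ) + k + 1) ^ α ≤ ((m:ℝ) + 1) ^ α := by
      apply Real.rpow_le_rpow_of_nonpos hm (by push_cast; linarith) hα.le
    have h2 : (1:ℝ) ≤ ((k:ℝ)+1) ^ (-α) := Real.one_le_rpow hk (by linarith)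
    nlinarith [Real.rpow_nonneg hm.le α, Real.rpow_nonneg (by positivity : (0:ℝ) ≤ (m:ℝ)+(k:ℝ)+1) α]

/-- the `k`-step shift on coefficient functions -/
def shiftFun (k : ℕ) (f : ℕ → ℂ) (n : ℕ) : ℂ := if k ≤ n then f (n - k) else 0

lemma eLpNorm_shiftFun_le (α : ℝ) (k : ℕ) (f : ℕ → ℂ) :
    eLpNorm (shiftFun k f) 2 (dirichletMeasure α) ≤
      ENNReal.ofReal ((k + 1 : ℝ) ^ (|α|/2)) * eLpNorm f 2 (dirichletMeasure α) := by
  rw [dm_eLpNorm, dm_eLpNorm]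
  have key : ∑' n, (‖shiftFun k f n‖₊ : ENNReal) ^ 2 * w α n
      ≤ ENNReal.ofReal ((k + 1 : ℝ) ^ |α|) * ∑' n, (‖f n‖₊ : ENNReal) ^ 2 * w α n := by
    have h1 : ∑' n, (‖shiftFun k f n‖₊ : ENNReal) ^ 2 * w α n
        = ∑' m, (‖f m‖₊ : ENNReal) ^ 2 * w α (m + k) := by
      rw [← Function.Injective.tsum_eq (g := fun m => m + k) (add_left_injective k)]
      · apply tsum_congr; intro m
        simp [shiftFun]
      · intro n hn
        rcases le_or_gt k n with h | h
        · exact ⟨n - k, by show n - k + k = n; omega⟩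
        · simp [shiftFun, h] at hn
    rw [h1, ← ENNReal.tsum_mul_left]
    apply ENNReal.tsum_le_tsum; intro m
    calc (‖f m‖₊ : ENNReal) ^ 2 * w α (m + k)
        ≤ (‖f m‖₊ : ENNReal) ^ 2 * (ENNReal.ofReal ((k + 1 : ℝ) ^ |α|) * w α m) :=
          mul_le_mul_right (weight_shift α k m) _
      _ = ENNReal.ofReal ((k + 1 : ℝ) ^ |α|) * ((‖f m‖₊ : ENNReal) ^ 2 * w α m) := by ring
  calc (∑' n, (‖shiftFun k f n‖₊ : ENNReal) ^ 2 * w α n) ^ (1/2:ℝ)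
      ≤ (ENNReal.ofReal ((k + 1 : ℝ) ^ |α|) * ∑' n, (‖f n‖₊ : ENNReal) ^ 2 * w α n) ^ (1/2:ℝ) :=
        ENNReal.rpow_le_rpow key (by norm_num)
    _ = ENNReal.ofReal ((k + 1 : ℝ) ^ (|α|/2)) * (∑' n, (‖f n‖₊ : ENNReal) ^ 2 * w α n) ^ (1/2:ℝ) := by
        rw [ENNReal.mul_rpow_of_nonneg _ _ (by norm_num)]
        congr 1
        rw [← ENNReal.ofReal_rpow_of_nonneg (by positivity : (0:ℝ) ≤ (k:ℝ)+1) (abs_nonneg α),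
          ← ENNReal.rpow_mul,
          ENNReal.ofReal_rpow_of_nonneg (by positivity : (0:ℝ) ≤ (k:ℝ)+1) (by positivity)]
        ring_nf

lemma dm_aesm (α : ℝ) (f : ℕ → ℂ) : AEStronglyMeasurable f (dirichletMeasure α) :=
  (measurable_from_top (f := f)).stronglyMeasurable.aestronglyMeasurable

lemma memLp_shiftFun {α : ℝ} (k : ℕ) (f : Dspace α) :
    MemLp (shiftFun k f) 2 (dirichletMeasure α) := by
  refine ⟨dm_aesm α _, ?_⟩
  apply lt_of_le_of_lt (eLpNorm_shiftFun_le α k f)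
  exact ENNReal.mul_lt_top ENNReal.ofReal_lt_top (Lp.eLpNorm_lt_top f)

lemma Dspace.ext {α : ℝ} {f g : Dspace α} (h : (f : ℕ → ℂ) = (g : ℕ → ℂ)) : f = g :=
  Lp.ext (h ▸ Filter.EventuallyEq.rfl)

lemma coe_toLp {α : ℝ} {F : ℕ → ℂ} (h : MemLp F 2 (dirichletMeasure α)) :
    ((h.toLp F : Dspace α) : ℕ → ℂ) = F := dm_ae_eq h.coeFn_toLp

lemma coe_add {α : ℝ} (f g : Dspace α) :
    ((f + g : Dspace α) : ℕ → ℂ) = (f : ℕ → ℂ) + (g : ℕ → ℂ) := dm_ae_eq (Lp.coeFn_add f g)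

lemma coe_smul {α : ℝ} (c : ℂ) (f : Dspace α) :
    ((c • f : Dspace α) : ℕ → ℂ) = c • (f : ℕ → ℂ) := dm_ae_eq (Lp.coeFn_smul c f)

lemma norm_Dspace (α : ℝ) (f : Dspace α) : ‖f‖ = (eLpNorm (f : ℕ → ℂ) 2 (dirichletMeasure α)).toReal :=
  rfl

noncomputable def shiftL (α : ℝ) (k : ℕ) : Dspace α →L[ℂ] Dspace α :=
  LinearMap.mkContinuous
    { toFun := fun f => (memLp_shiftFun k f).toLp (shiftFun k ((f : ℕ → ℂ)))
      map_add' := fun f g => by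
        apply Dspace.ext
        rw [coe_add ((memLp_shiftFun k f).toLp _), coe_toLp, coe_toLp, coe_toLp, coe_add]
        funext n
        simp only [shiftFun, Pi.add_apply]
        split_ifs <;> simp
      map_smul' := fun c f => by
        have hfun : shiftFun k ((c • f : Dspace α) : ℕ → ℂ) = c • shiftFun k ((f : ℕ → ℂ)) := by
          rw [coe_smul]
          funext n
          simp only [shiftFun, Pi.smul_apply, smul_eq_mul]
          split_ifs <;> simp
        apply Dspace.ext
        simp only [RingHom.id_apply]
        conv_rhs => rw [coe_smul]
        rw [coe_toLp, coe_toLp, hfun] }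
    ((k + 1 : ℝ) ^ (|α|/2))
    (fun f => by
      simp only [LinearMap.coe_mk, AddHom.coe_mk]
      rw [norm_Dspace, norm_Dspace, dm_ae_eq (MemLp.coeFn_toLp _)]
      rw [← ENNReal.toReal_ofReal (by positivity : (0:ℝ) ≤ ((k:ℝ)+1) ^ (|α|/2)), ← ENNReal.toReal_mul]
      apply ENNReal.toReal_mono
      · exact ENNReal.mul_ne_top ENNReal.ofReal_ne_top (Lp.eLpNorm_ne_top f)
      · exact eLpNorm_shiftFun_le α k (f : ℕ → ℂ))

lemma shiftL_apply {α : ℝ} (k : ℕ) (f : Dspace α) :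
    ((shiftL α k f : Dspace α) : ℕ → ℂ) = shiftFun k (f : ℕ → ℂ) := by
  exact coe_toLp (memLp_shiftFun k f)

lemma norm_shiftL_le (α : ℝ) (k : ℕ) : ‖shiftL α k‖ ≤ (k + 1 : ℝ) ^ (|α|/2) :=
  LinearMap.mkContinuous_norm_le _ (by positivity) _

lemma coeff_le {α : ℝ} (f : Dspace α) (n : ℕ) :
    ‖(f : ℕ → ℂ) n‖ ≤ (n + 1 : ℝ) ^ (|α|/2) * ‖f‖ := by
  set S := ∑' m, (‖(f : ℕ → ℂ) m‖₊ : ENNReal) ^ 2 * w α m with hSdef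
  have hS : eLpNorm (f : ℕ → ℂ) 2 (dirichletMeasure α) = S ^ (1/2 : ℝ) := dm_eLpNorm α _
  have hfin : S ≠ ⊤ := by
    intro h
    have := Lp.eLpNorm_lt_top f
    rw [hS, h] at this
    simp [ENNReal.top_rpow_of_pos] at this
  have hnorm : ‖f‖ ^ 2 = S.toReal := by
    rw [norm_Dspace, hS, ← ENNReal.toReal_rpow, ← Real.rpow_natCast _ 2,
      ← Real.rpow_mul ENNReal.toReal_nonneg]
    norm_num
  have hterm : (‖(f : ℕ → ℂ) n‖₊ : ENNReal) ^ 2 * w α n ≤ S := ENNReal.le_tsum n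
  have hreal : ‖(f : ℕ → ℂ) n‖ ^ 2 * ((n:ℝ) + 1) ^ α ≤ ‖f‖ ^ 2 := by
    rw [hnorm]
    have := ENNReal.toReal_mono hfin hterm
    rwa [ENNReal.toReal_mul, ENNReal.toReal_pow, ENNReal.coe_toReal, coe_nnnorm,
      w, ENNReal.toReal_ofReal (by positivity)] at this
  have hpos : (0:ℝ) < ((n:ℝ) + 1) ^ α := by positivity
  have h2 : ‖(f : ℕ → ℂ) n‖ ^ 2 ≤ (((n:ℝ) + 1) ^ (|α|/2) * ‖f‖) ^ 2 := by
    have hle : ((n:ℝ) + 1) ^ (-α) ≤ (((n:ℝ) + 1) ^ (|α|/2)) ^ 2 := by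
      rw [← Real.rpow_natCast (((n:ℝ) + 1) ^ (|α|/2)), ← Real.rpow_mul (by positivity)]
      apply Real.rpow_le_rpow_of_exponent_le (by norm_num)
      have := neg_abs_le α
      norm_num
      linarith
    have h3 : ‖(f : ℕ → ℂ) n‖ ^ 2 ≤ ‖f‖ ^ 2 * ((n:ℝ) + 1) ^ (-α) := by
      rw [Real.rpow_neg (by positivity), ← div_eq_mul_inv, le_div_iff₀ hpos]
      exact hreal
    calc ‖(f : ℕ → ℂ) n‖ ^ 2 ≤ ‖f‖ ^ 2 * ((n:ℝ) + 1) ^ (-α) := h3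
      _ ≤ ‖f‖ ^ 2 * (((n:ℝ) + 1) ^ (|α|/2)) ^ 2 := by nlinarith [norm_nonneg f, sq_nonneg ‖f‖]
      _ = (((n:ℝ) + 1) ^ (|α|/2) * ‖f‖) ^ 2 := by ring
  exact (pow_le_pow_iff_left₀ (norm_nonneg _) (by positivity) two_ne_zero).mp h2

noncomputable def evCLM (α : ℝ) (n : ℕ) : Dspace α →L[ℂ] ℂ :=
  LinearMap.mkContinuous
    { toFun := fun f => (f : ℕ → ℂ) n
      map_add' := fun f g => by rw [coe_add]; rfl
      map_smul' := fun c f => by rw [coe_smul]; rfl }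
    ((n + 1 : ℝ) ^ (|α|/2)) (fun f => coeff_le f n)

lemma summable_poly_geom (c s : ℝ) (hc : 1 ≤ c) {r : ℝ} (h0 : 0 ≤ r) (h1 : r < 1) :
    Summable (fun n : ℕ => ((n:ℝ) + c) ^ s * r ^ n) := by
  set m := ⌈s⌉₊ with hm
  set A : ℝ := c ^ m * 2 ^ m with hA
  have hA0 : 0 < A := by positivity
  have hsum : Summable (fun n : ℕ => A * ((n:ℝ) ^ m * r ^ n) + A * r ^ n) := by
    apply Summable.add
    · exact (summable_pow_mul_geometric_of_norm_lt_one m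
        (by rwa [Real.norm_eq_abs, abs_of_nonneg h0])).mul_left A
    · exact (summable_geometric_of_lt_one h0 h1).mul_left A
  apply Summable.of_nonneg_of_le (fun n => by positivity) (fun n => ?_) hsum
  have hb : ((n:ℝ) + c) ^ s ≤ A * ((n:ℝ) ^ m + 1) := by
    have h1n : (1:ℝ) ≤ (n:ℝ) + c := by
      have : (0:ℝ) ≤ (n:ℝ) := Nat.cast_nonneg n
      linarith
    calc ((n:ℝ) + c) ^ s ≤ ((n:ℝ) + c) ^ (m:ℝ) :=
          Real.rpow_le_rpow_of_exponent_le h1n (Nat.le_ceil s)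
      _ = ((n:ℝ) + c) ^ m := Real.rpow_natCast _ m
      _ ≤ (c * ((n:ℝ) + 1)) ^ m := by
          apply pow_le_pow_left₀ (by linarith) (by nlinarith [Nat.cast_nonneg (α := ℝ) n])
      _ = c ^ m * ((n:ℝ) + 1) ^ m := mul_pow _ _ _
      _ ≤ c ^ m * (2 ^ m * ((n:ℝ) ^ m + 1)) := by
          have hcm : (0:ℝ) < c ^ m := by positivity
          apply mul_le_mul_of_nonneg_left ?_ hcm.le
          rcases Nat.eq_zero_or_pos n with hn | hn
          · subst hn
            simp only [Nat.cast_zero, zero_add, one_pow]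
            nlinarith [(one_le_pow₀ (by norm_num : (1:ℝ) ≤ 2) : (1:ℝ) ≤ 2 ^ m), pow_nonneg (le_refl (0:ℝ)) m]
          · have h2n : ((n:ℝ) + 1) ≤ 2 * (n:ℝ) := by
              have : (1:ℝ) ≤ (n:ℝ) := by exact_mod_cast hn
              linarith
            calc ((n:ℝ) + 1) ^ m ≤ (2 * (n:ℝ)) ^ m := by
                  apply pow_le_pow_left₀ (by positivity) h2n
              _ = 2 ^ m * (n:ℝ) ^ m := mul_pow _ _ _
              _ ≤ 2 ^ m * ((n:ℝ) ^ m + 1) := by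
                  apply mul_le_mul_of_nonneg_left (by linarith) (by positivity)
      _ = A * ((n:ℝ) ^ m + 1) := by rw [hA]; ring
  have hr : (0:ℝ) ≤ r ^ n := by positivity
  calc ((n:ℝ) + c) ^ s * r ^ n ≤ A * ((n:ℝ) ^ m + 1) * r ^ n :=
        mul_le_mul_of_nonneg_right hb hr
    _ = A * ((n:ℝ) ^ m * r ^ n) + A * r ^ n := by ring

lemma summable_coeff (α : ℝ) (f : Dspace α) {z : ℂ} (hz : ‖z‖ < 1) :
    Summable (fun n => ‖(f : ℕ → ℂ) n * z ^ n‖) := by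
  have hg : Summable (fun n : ℕ => ((n:ℝ) + 1) ^ (|α|/2) * ‖z‖ ^ n * ‖f‖) :=
    (summable_poly_geom 1 (|α|/2) le_rfl (norm_nonneg z) hz).mul_right ‖f‖
  apply Summable.of_nonneg_of_le (fun n => norm_nonneg _) (fun n => ?_) hg
  rw [norm_mul, norm_pow]
  calc ‖(f : ℕ → ℂ) n‖ * ‖z‖ ^ n ≤ (((n:ℝ) + 1) ^ (|α|/2) * ‖f‖) * ‖z‖ ^ n :=
        mul_le_mul_of_nonneg_right (coeff_le f n) (by positivity)
    _ = ((n:ℝ) + 1) ^ (|α|/2) * ‖z‖ ^ n * ‖f‖ := by ring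

set_option maxHeartbeats 1000000 in
lemma isMult_tsum_shift (α : ℝ) {b : ℕ → ℂ}
    (hb : Summable (fun k => ‖b k‖ * ((k:ℝ) + 1) ^ (|α|/2))) :
    ∃ T : Dspace α →L[ℂ] Dspace α, IsMultiplicationBy α (fun z => ∑' k, b k * z ^ k) T := by
  have hbs : Summable (fun k => b k • shiftL α k) := by
    apply Summable.of_norm
    apply Summable.of_nonneg_of_le (fun k => norm_nonneg _) (fun k => ?_) hb
    exact le_trans (norm_smul_le (b k) (shiftL α k))
      (mul_le_mul_of_nonneg_left (norm_shiftL_le α k) (norm_nonneg _))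
  refine ⟨∑' k, b k • shiftL α k, ?_⟩
  intro f z hz
  rw [Metric.mem_ball, dist_zero_right] at hz
  set F := ((f : ℕ → ℂ)) with hF
  have hcoeff : ∀ n, (((∑' k, b k • shiftL α k) f : Dspace α) : ℕ → ℂ) n
      = ∑ k ∈ Finset.range (n+1), b k * F (n - k) := by
    intro n
    have h1 : (((∑' k, b k • shiftL α k) f : Dspace α) : ℕ → ℂ) n
        = ((evCLM α n).comp (ContinuousLinearMap.apply ℂ (Dspace α) f)) (∑' k, b k • shiftL α k) :=
      rfl
    rw [h1, ContinuousLinearMap.map_tsum _ hbs]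
    have h2 : ∀ k, ((evCLM α n).comp (ContinuousLinearMap.apply ℂ (Dspace α) f)) (b k • shiftL α k)
        = b k * shiftFun k F n := by
      intro k
      simp only [ContinuousLinearMap.comp_apply, ContinuousLinearMap.apply_apply,
        ContinuousLinearMap.smul_apply]
      show ((b k • shiftL α k f : Dspace α) : ℕ → ℂ) n = _
      rw [coe_smul, shiftL_apply]
      rfl
    rw [tsum_congr h2, tsum_eq_sum (s := Finset.range (n+1)) ?_]
    · apply Finset.sum_congr rfl
      intro k hk
      rw [Finset.mem_range] at hk
      rw [shiftFun, if_pos (by omega)]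
    · intro k hk
      rw [Finset.mem_range, not_lt] at hk
      rw [shiftFun, if_neg (by omega), mul_zero]
  have hFsum : Summable (fun n => ‖F n * z ^ n‖) := summable_coeff α f hz
  have hbz : Summable (fun k => ‖b k * z ^ k‖) := by
    apply Summable.of_nonneg_of_le (fun k => norm_nonneg _) (fun k => ?_) hb
    rw [norm_mul, norm_pow]
    apply mul_le_mul_of_nonneg_left ?_ (norm_nonneg _)
    calc ‖z‖ ^ k ≤ 1 := pow_le_one₀ (norm_nonneg z) hz.le
      _ ≤ ((k:ℝ) + 1) ^ (|α|/2) := Real.one_le_rpow (by norm_num) (by positivity)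
  rw [seriesFn, seriesFn]
  calc ∑' n, (((∑' k, b k • shiftL α k) f : Dspace α) : ℕ → ℂ) n * z ^ n
      = ∑' n, ∑ k ∈ Finset.range (n+1), (b k * z ^ k) * (F (n-k) * z ^ (n-k)) := by
        apply tsum_congr; intro n
        rw [hcoeff n, Finset.sum_mul]
        apply Finset.sum_congr rfl
        intro k hk
        rw [Finset.mem_range] at hk
        calc b k * F (n - k) * z ^ n = b k * F (n-k) * (z ^ k * z ^ (n-k)) := by
              rw [← pow_add, (by omega : k + (n - k) = n)]
          _ = (b k * z ^ k) * (F (n-k) * z ^ (n-k)) := by ring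
    _ = (∑' k, b k * z ^ k) * ∑' n, F n * z ^ n :=
        (tsum_mul_tsum_eq_tsum_sum_range_of_summable_norm hbz hFsum).symm

lemma isMult_one (α : ℝ) : IsMultiplicationBy α (fun _ => 1) 1 := by
  intro f z hz
  rw [ContinuousLinearMap.one_apply, one_mul]

lemma isMult_mul {α : ℝ} {B1 B2 : ℂ → ℂ} {T1 T2 : Dspace α →L[ℂ] Dspace α}
    (h1 : IsMultiplicationBy α B1 T1) (h2 : IsMultiplicationBy α B2 T2) :
    IsMultiplicationBy α (fun z => B1 z * B2 z) (T1 * T2) := by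
  intro f z hz
  rw [ContinuousLinearMap.mul_apply, h1 (T2 f) z hz, h2 f z hz]
  ring

lemma isMult_smul {α : ℝ} (c : ℂ) {B : ℂ → ℂ} {T : Dspace α →L[ℂ] Dspace α}
    (h : IsMultiplicationBy α B T) :
    IsMultiplicationBy α (fun z => c * B z) (c • T) := by
  intro f z hz
  rw [ContinuousLinearMap.smul_apply]
  have hs : seriesFn ((c • T f : Dspace α) : ℕ → ℂ) z = c * seriesFn ((T f : Dspace α) : ℕ → ℂ) z := by
    rw [seriesFn, seriesFn, coe_smul, ← tsum_mul_left]
    apply tsum_congr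
    intro n
    simp [mul_assoc]
  rw [hs, h f z hz]
  ring

lemma isMult_congr {α : ℝ} {B B' : ℂ → ℂ} {T : Dspace α →L[ℂ] Dspace α}
    (h : IsMultiplicationBy α B T) (he : ∀ z ∈ Metric.ball (0:ℂ) 1, B z = B' z) :
    IsMultiplicationBy α B' T := by
  intro f z hz
  rw [← he z hz]
  exact h f z hz

lemma isMult_list {α : ℝ} {ι : Type} (l : List ι) (g : ι → ℂ → ℂ)
    (T : ι → Dspace α →L[ℂ] Dspace α) (h : ∀ i, IsMultiplicationBy α (g i) (T i)) :
    IsMultiplicationBy α (fun z => (l.map (fun i => g i z)).prod) (l.map T).prod := by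
  induction l with
  | nil => simpa using isMult_one α
  | cons i l ih =>
    simp only [List.map_cons, List.prod_cons]
    exact isMult_mul (h i) ih

/-- Taylor coefficients of the Blaschke factor `(z-a)/(1-conj(a) z)`. -/
noncomputable def bl (a : ℂ) : ℕ → ℂ :=
  fun k => if k = 0 then -a else (starRingEnd ℂ a) ^ (k-1) * (1 - starRingEnd ℂ a * a)

lemma bl_summable (α : ℝ) {a : ℂ} (ha : ‖a‖ < 1) :
    Summable (fun k => ‖bl a k‖ * ((k:ℝ) + 1) ^ (|α|/2)) := by
  apply (summable_nat_add_iff 1).mp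
  have h2 : Summable (fun k : ℕ => 2 * (((k:ℝ) + 2) ^ (|α|/2) * ‖a‖ ^ k)) :=
    (summable_poly_geom 2 (|α|/2) (by norm_num) (norm_nonneg a) ha).mul_left 2
  apply Summable.of_nonneg_of_le (fun k => by positivity) (fun k => ?_) h2
  have hb : ‖bl a (k+1)‖ ≤ 2 * ‖a‖ ^ k := by
    rw [bl]
    simp only [Nat.add_sub_cancel, if_neg (Nat.succ_ne_zero k)]
    rw [norm_mul, norm_pow, RCLike.norm_conj]
    have h1 : ‖(1:ℂ) - starRingEnd ℂ a * a‖ ≤ 2 := by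
      calc ‖(1:ℂ) - starRingEnd ℂ a * a‖ ≤ ‖(1:ℂ)‖ + ‖starRingEnd ℂ a * a‖ := norm_sub_le _ _
        _ ≤ 1 + 1 := by
            rw [norm_one, norm_mul, RCLike.norm_conj]
            nlinarith [norm_nonneg a]
        _ = 2 := by norm_num
    nlinarith [pow_nonneg (norm_nonneg a) k, norm_nonneg ((1:ℂ) - starRingEnd ℂ a * a)]
  have hcast : ((k + 1 : ℕ) : ℝ) + 1 = (k:ℝ) + 2 := by push_cast; ring
  rw [hcast]
  have hp : (0:ℝ) ≤ ((k:ℝ) + 2) ^ (|α|/2) := by positivity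
  nlinarith [mul_le_mul_of_nonneg_right hb hp]

lemma bl_series {a z : ℂ} (ha : ‖a‖ < 1) (hz : ‖z‖ < 1) :
    ∑' k, bl a k * z ^ k = (z - a) / (1 - starRingEnd ℂ a * z) := by
  have haz : ‖starRingEnd ℂ a * z‖ < 1 := by
    rw [norm_mul, RCLike.norm_conj]
    nlinarith [norm_nonneg a, norm_nonneg z]
  have hne : (1 : ℂ) - starRingEnd ℂ a * z ≠ 0 := by
    intro h
    rw [sub_eq_zero] at h
    rw [← h] at haz
    simp at haz
  have h0 : Summable (fun k => ‖bl a k‖) := by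
    have := bl_summable 0 ha
    simpa using this
  have hsum : Summable (fun k => bl a k * z ^ k) := by
    apply Summable.of_norm
    apply Summable.of_nonneg_of_le (fun k => norm_nonneg _) (fun k => ?_) h0
    rw [norm_mul, norm_pow]
    nlinarith [norm_nonneg (bl a k), pow_nonneg (norm_nonneg z) k,
      pow_le_one₀ (norm_nonneg z) hz.le (n := k)]
  rw [Summable.tsum_eq_zero_add hsum]
  have hterm : ∀ k : ℕ, bl a (k+1) * z ^ (k+1) =
      ((1 - starRingEnd ℂ a * a) * z) * (starRingEnd ℂ a * z) ^ k := by
    intro k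
    rw [bl]
    simp only [Nat.add_sub_cancel, if_neg (Nat.succ_ne_zero k)]
    rw [mul_pow, pow_succ]
    ring
  rw [tsum_congr hterm, tsum_mul_left, tsum_geometric_of_norm_lt_one haz]
  rw [bl]
  simp only [if_pos rfl, ↓reduceIte, pow_zero, mul_one]
  field_simp
  ring


/-- Every finite Blaschke product is a multiplier of `D_α`, for every `α ∈ ℝ`:
multiplication by `B` maps `D_α` into `D_α` and is bounded on `D_α`. -/
theorem blaschke_is_multiplier (α : ℝ) (B : ℂ → ℂ) (hB : IsFiniteBlaschke B) :
    ∃ T : Dspace α →L[ℂ] Dspace α, IsMultiplicationBy α B T := by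
  obtain ⟨θ, N, a, hN, ha, hBz⟩ := hB
  have hanorm : ∀ i, ‖a i‖ < 1 := fun i => by
    have := ha i
    rwa [mem_ball_zero_iff] at this
  have key : ∀ i : Fin N, ∃ T : Dspace α →L[ℂ] Dspace α,
      IsMultiplicationBy α (fun z => ∑' k, bl (a i) k * z ^ k) T :=
    fun i => isMult_tsum_shift α (bl_summable α (hanorm i))
  choose T hT using key
  refine ⟨Complex.exp (θ * Complex.I) • ((List.finRange N).map T).prod, ?_⟩
  have hlist := isMult_list (List.finRange N) (fun i z => ∑' k, bl (a i) k * z ^ k) T hT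
  have hsmul := isMult_smul (Complex.exp (θ * Complex.I)) hlist
  apply isMult_congr hsmul
  intro z hz
  rw [mem_ball_zero_iff] at hz
  rw [hBz z]
  congr 1
  rw [Fin.prod_univ_def]
  congr 1
  apply List.map_congr_left
  intro i _
  exact bl_series (hanorm i) hz
end

section
/- Let k ≥ 1 be an integer, α ∈ [−1, 0], and let z^k D_α = {z^k f : f ∈ D_α}, a closed subspace of D_α with the inherited norm. Then the operator M_{z^k} of multiplication by z^k has the wandering subspace property in z^k D_α: every closed M_{z^k}-invariant subspace N with N ⊆ z^k D_α satisfies N = [N ⊖ z^k N]_{M_{z^k}}. -/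
open MeasureTheory

namespace DirichletWandering

variable {α : ℝ}

/-- the weight -/
noncomputable def w (α : ℝ) (n : ℕ) : ℝ := ((n : ℝ) + 1) ^ α

lemma w_pos (α : ℝ) (n : ℕ) : 0 < w α n := by
  unfold w; positivity

lemma dirichletMeasure_singleton (α : ℝ) (n : ℕ) :
    dirichletMeasure α {n} = ENNReal.ofReal (w α n) := by
  rw [dirichletMeasure, withDensity_apply _ (MeasurableSet.singleton n)]
  rw [lintegral_singleton]
  simp [w, Measure.count_singleton]

lemma dirichletMeasure_singleton_toReal (α : ℝ) (n : ℕ) :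
    (dirichletMeasure α {n}).toReal = w α n := by
  rw [dirichletMeasure_singleton, ENNReal.toReal_ofReal (w_pos α n).le]

lemma dirichletMeasure_singleton_ne_zero (α : ℝ) (n : ℕ) :
    dirichletMeasure α {n} ≠ 0 := by
  rw [dirichletMeasure_singleton]
  simp [ENNReal.ofReal_eq_zero, not_le, w_pos α n]

/-- a.e. properties hold everywhere -/
lemma eventually_all {p : ℕ → Prop} (h : ∀ᵐ n ∂(dirichletMeasure α), p n) (n : ℕ) : p n := by
  by_contra hn
  have h1 : dirichletMeasure α {m | ¬ p m} = 0 := h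
  have h2 : dirichletMeasure α {n} ≤ dirichletMeasure α {m | ¬ p m} :=
    measure_mono (by simpa using hn)
  exact dirichletMeasure_singleton_ne_zero α n (le_antisymm (h1 ▸ h2) (zero_le))

end DirichletWandering

namespace DirichletWandering

open scoped ComplexConjugate

variable {α : ℝ}

lemma lintegral_dirichlet (α : ℝ) (g : ℕ → ENNReal) :
    ∫⁻ n, g n ∂(dirichletMeasure α) = ∑' n, ENNReal.ofReal (w α n) * g n := by
  rw [dirichletMeasure, lintegral_withDensity_eq_lintegral_mul _ (by
    exact Measurable.of_discrete) (by exact Measurable.of_discrete),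
    lintegral_count]
  rfl

lemma hasSum_integral {E : Type*} [NormedAddCommGroup E] [NormedSpace ℝ E] [CompleteSpace E]
    {h : ℕ → E} (hh : Integrable h (dirichletMeasure α)) :
    HasSum (fun n => w α n • h n) (∫ n, h n ∂(dirichletMeasure α)) := by
  have hsum : Summable (fun n => w α n • h n) := by
    apply Summable.of_norm
    have hfin := hh.2
    rw [HasFiniteIntegral, lintegral_dirichlet] at hfin
    have := ENNReal.summable_toReal hfin.ne
    convert this using 2 with n
    rw [norm_smul, ENNReal.toReal_mul, ENNReal.toReal_ofReal (w_pos α n).le]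
    simp [Real.norm_of_nonneg (w_pos α n).le]
  have := hsum.hasSum
  convert this using 1
  rw [integral_countable' hh]
  congr 1
  ext n
  rw [measureReal_def, dirichletMeasure_singleton_toReal]

lemma hasSum_inner (f g : Dspace α) :
    HasSum (fun n => w α n • (conj ((f : ℕ → ℂ) n) * (g : ℕ → ℂ) n)) ((inner ℂ f g : ℂ)) := by
  have h1 : (inner ℂ f g : ℂ) = ∫ n, conj ((f : ℕ → ℂ) n) * ((g : ℕ → ℂ) n) ∂(dirichletMeasure α) := by
    rw [L2.inner_def]
    congr 1
    funext n
    exact mul_comm _ _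
  rw [h1]
  exact hasSum_integral ((L2.integrable_inner (𝕜 := ℂ) f g).congr (ae_of_all _ fun n => mul_comm _ _))

lemma hasSum_norm_sq (f : Dspace α) :
    HasSum (fun n => w α n * ‖(f : ℕ → ℂ) n‖ ^ 2) (‖f‖ ^ 2) := by
  have h := (hasSum_inner f f).mapL Complex.reCLM
  have h2 : Complex.reCLM ((inner ℂ f f : ℂ)) = ‖f‖ ^ 2 := by
    simpa using inner_self_eq_norm_sq (𝕜 := ℂ) f
  rw [h2] at h
  convert h using 2 with n
  have hc : conj ((f : ℕ → ℂ) n) * (f : ℕ → ℂ) n = (Complex.normSq ((f : ℕ → ℂ) n) : ℂ) := by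
    rw [mul_comm, Complex.mul_conj]
  rw [hc]
  rw [Complex.real_smul, ← Complex.ofReal_mul, Complex.reCLM_apply, Complex.ofReal_re]
  congr 1
  rw [Complex.normSq_eq_norm_sq]

end DirichletWandering

namespace DirichletWandering

variable {α : ℝ}

lemma w_antitone (hα0 : α ≤ 0) {m n : ℕ} (h : m ≤ n) : w α n ≤ w α m := by
  apply Real.rpow_le_rpow_of_nonpos (by positivity) (by exact_mod_cast by linarith [h] : ((m:ℝ)+1) ≤ ((n:ℝ)+1)) hα0

lemma w_eq_inv_rpow (α : ℝ) (n : ℕ) : w α n = (((n:ℝ) + 1) ^ (-α))⁻¹ := by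
  rw [w, ← Real.rpow_neg (by positivity), neg_neg]

lemma u_midpoint (hα1 : -1 ≤ α) (hα0 : α ≤ 0) (m k : ℕ) :
    ((m:ℝ) + 1) ^ (-α) + ((m:ℝ) + 2*k + 1) ^ (-α) ≤ 2 * (((m:ℝ) + k + 1) ^ (-α)) := by
  have hconc := Real.concaveOn_rpow (p := -α) (by linarith) (by linarith)
  have h := hconc.2 (show ((m:ℝ) + 1) ∈ Set.Ici (0:ℝ) by simp only [Set.mem_Ici]; positivity)
      (show ((m:ℝ) + 2*k + 1) ∈ Set.Ici (0:ℝ) by simp only [Set.mem_Ici]; positivity)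
      (show (0:ℝ) ≤ 1/2 by norm_num) (show (0:ℝ) ≤ 1/2 by norm_num)
      (show (1:ℝ)/2 + 1/2 = 1 by norm_num)
  have heq : ((1:ℝ)/2) • ((m:ℝ) + 1) + ((1:ℝ)/2) • ((m:ℝ) + 2*k + 1) = (m:ℝ) + k + 1 := by
    simp only [smul_eq_mul]; ring
  rw [heq] at h
  simp only [smul_eq_mul] at h
  linarith

lemma aux_inv (A B C : ℝ) (hA : 0 < A) (hB : 0 < B) (hC : 0 < C) (h : A + C ≤ 2*B) :
    (B⁻¹)^2 ≤ (2*B⁻¹ - (B⁻¹)^2/A⁻¹) * C⁻¹ := by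
  have key : C ≤ 2*B - A := by linarith
  have h2 : (2*B⁻¹ - (B⁻¹)^2/A⁻¹) = (2*B - A) / (B^2) := by
    field_simp
  rw [h2, inv_pow]
  have h3 : (2*B-A)/B^2 * C⁻¹ = (2*B-A)/(B^2*C) := by
    field_simp
  rw [h3, inv_eq_one_div, div_le_div_iff₀ (by positivity) (by positivity)]
  nlinarith

end DirichletWandering

namespace DirichletWandering

open scoped ComplexConjugate

variable {α : ℝ} {k : ℕ}

lemma w_diamond (hα1 : -1 ≤ α) (hα0 : α ≤ 0) (k m : ℕ) :
    w α (m+k)^2 ≤ (2 * w α (m+k) - w α (m+k)^2 / w α m) * w α (m+k+k) := by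
  have e1 : (((m+k:ℕ):ℝ) + 1) = (m:ℝ) + k + 1 := by push_cast; ring
  have e2 : (((m+k+k:ℕ):ℝ) + 1) = (m:ℝ) + 2*k + 1 := by push_cast; ring
  have hC : w α (m+k+k) = (((m:ℝ) + 2*k + 1) ^ (-α))⁻¹ := by rw [w_eq_inv_rpow, e2]
  have hB : w α (m+k) = (((m:ℝ) + k + 1) ^ (-α))⁻¹ := by rw [w_eq_inv_rpow, e1]
  have hA : w α m = (((m:ℝ) + 1) ^ (-α))⁻¹ := w_eq_inv_rpow α m
  rw [hA, hB, hC]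
  exact aux_inv _ _ _ (by positivity) (by positivity) (by positivity)
    (u_midpoint hα1 hα0 m k)

lemma w_c_nonneg (hα0 : α ≤ 0) (k m : ℕ) :
    0 ≤ 2 * w α (m+k) - w α (m+k)^2 / w α m := by
  have h1 : w α (m+k) ≤ w α m := w_antitone hα0 (Nat.le_add_right m k)
  have h2 : w α (m+k)^2 / w α m ≤ w α (m+k) := by
    rw [div_le_iff₀ (w_pos α m)]
    nlinarith [w_pos α (m+k)]
  linarith [w_pos α (m+k)]

lemma amgm (Wc c W' : ℝ) (a b : ℂ) (hWc : 0 ≤ Wc) (hc : 0 ≤ c) (hW' : 0 ≤ W')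
    (h : Wc^2 ≤ c*W') :
    2 * (Wc * (conj a * b).re) ≤ c * ‖a‖^2 + W' * ‖b‖^2 := by
  have h1 : (conj a * b).re ≤ ‖a‖ * ‖b‖ := by
    calc (conj a * b).re ≤ ‖conj a * b‖ := Complex.re_le_norm _
    _ = ‖a‖ * ‖b‖ := by rw [norm_mul, Complex.norm_conj]
  have h2 : 2 * (Wc * (conj a * b).re) ≤ 2 * (Wc * (‖a‖ * ‖b‖)) := by
    have := mul_le_mul_of_nonneg_left h1 hWc
    linarith
  refine h2.trans ?_
  have hWc' : Wc ≤ Real.sqrt c * Real.sqrt W' := by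
    rw [← Real.sqrt_mul_self hWc, ← Real.sqrt_mul hc]
    exact Real.sqrt_le_sqrt (by nlinarith)
  have hs := sq_nonneg (Real.sqrt c * ‖a‖ - Real.sqrt W' * ‖b‖)
  have hsc := Real.sq_sqrt hc
  have hsW := Real.sq_sqrt hW'
  nlinarith [norm_nonneg a, norm_nonneg b, mul_nonneg (norm_nonneg a) (norm_nonneg b),
    Real.sqrt_nonneg c, Real.sqrt_nonneg W']

end DirichletWandering

namespace DirichletWandering

open scoped ComplexConjugate

variable {α : ℝ} {k : ℕ} {T : Dspace α →L[ℂ] Dspace α}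

lemma shift_add_injective (k : ℕ) : Function.Injective (fun m : ℕ => m + k) :=
  fun a b h => by simpa using h

lemma hasSum_norm_sq_shift (hT : IsShiftBy α k T) (f : Dspace α) :
    HasSum (fun m => w α (m+k) * ‖(f : ℕ → ℂ) m‖ ^ 2) (‖T f‖ ^ 2) := by
  have h := hasSum_norm_sq (T f)
  rw [← Function.Injective.hasSum_iff (g := fun m : ℕ => m + k) (shift_add_injective k)
    (by
      intro n hn
      have hnk : n < k := by
        by_contra hle
        exact hn ⟨n - k, by simp only []; omega⟩
      simp [hT (f) n, Nat.not_le.mpr hnk])] at h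
  convert h using 2 with m
  simp only [Function.comp_apply]
  rw [hT f (m+k)]
  simp

lemma hasSum_inner_shift (hT : IsShiftBy α k T) (v z : Dspace α) :
    HasSum (fun m => w α (m+k) • (conj ((v : ℕ → ℂ) m) * (z : ℕ → ℂ) (m+k)))
      ((inner ℂ (T v) z : ℂ)) := by
  have h := hasSum_inner (T v) z
  rw [← Function.Injective.hasSum_iff (g := fun m : ℕ => m + k) (shift_add_injective k)
    (by
      intro n hn
      have hnk : n < k := by
        by_contra hle
        exact hn ⟨n - k, by simp only []; omega⟩
      simp [hT v n, Nat.not_le.mpr hnk])] at h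
  convert h using 2 with m
  simp only [Function.comp_apply]
  rw [hT v (m+k)]
  simp

lemma hasSum_inner_shift2 (hT : IsShiftBy α k T) (v x : Dspace α) :
    HasSum (fun m => w α (m+k) • (conj ((v : ℕ → ℂ) m) * (x : ℕ → ℂ) m))
      ((inner ℂ (T v) (T x) : ℂ)) := by
  have h := hasSum_inner (T v) (T x)
  rw [← Function.Injective.hasSum_iff (g := fun m : ℕ => m + k) (shift_add_injective k)
    (by
      intro n hn
      have hnk : n < k := by
        by_contra hle
        exact hn ⟨n - k, by simp only []; omega⟩
      simp [hT v n, Nat.not_le.mpr hnk])] at h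
  convert h using 2 with m
  simp only [Function.comp_apply]
  rw [hT v (m+k), hT x (m+k)]
  simp

end DirichletWandering

namespace DirichletWandering

open scoped ComplexConjugate

variable {α : ℝ} {k : ℕ} {T : Dspace α →L[ℂ] Dspace α}

noncomputable def Dsq (α : ℝ) (k : ℕ) (f : Dspace α) : ℝ :=
  ∑' m, w α (m+k)^2 / w α m * ‖(f : ℕ → ℂ) m‖ ^ 2

lemma summable_Dsq (hα0 : α ≤ 0) (f : Dspace α) :
    Summable (fun m => w α (m+k)^2 / w α m * ‖(f : ℕ → ℂ) m‖ ^ 2) := by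
  apply Summable.of_nonneg_of_le
    (fun m => mul_nonneg (div_nonneg (sq_nonneg _) (w_pos α m).le) (sq_nonneg _))
    (fun m => ?_) (hasSum_norm_sq f).summable
  have h1 : w α (m+k) ≤ w α m := w_antitone hα0 (Nat.le_add_right m k)
  have h2 : w α (m+k)^2 / w α m ≤ w α m := by
    rw [div_le_iff₀ (w_pos α m)]
    nlinarith [w_pos α (m+k), w_pos α m]
  have := sq_nonneg ‖(f : ℕ → ℂ) m‖
  apply mul_le_mul_of_nonneg_right h2 (by positivity)

lemma hasSum_Dsq (hα0 : α ≤ 0) (f : Dspace α) :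
    HasSum (fun m => w α (m+k)^2 / w α m * ‖(f : ℕ → ℂ) m‖ ^ 2) (Dsq α k f) :=
  (summable_Dsq hα0 f).hasSum

/-- The main concrete inequality (Shimorin-type). -/
lemma F3 (hα1 : -1 ≤ α) (hα0 : α ≤ 0) (hT : IsShiftBy α k T) (v z : Dspace α) :
    2 * (inner ℂ (T v) z : ℂ).re ≤ 2 * ‖T v‖^2 + ‖T z‖^2 - Dsq α k v := by
  classical
  -- LHS HasSum
  have hL0 := (hasSum_inner_shift hT v z).mapL Complex.reCLM
  have hL : HasSum (fun m => 2 * (w α (m+k) * (conj ((v : ℕ → ℂ) m) * (z : ℕ → ℂ) (m+k)).re))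
      (2 * (inner ℂ (T v) z : ℂ).re) := by
    refine HasSum.mul_left 2 ?_
    convert hL0 using 2 with m
    · rfl
    · simp [Complex.smul_re]
    · simp
  -- RHS pieces
  have hR1 : HasSum (fun m => (2 * w α (m+k) - w α (m+k)^2 / w α m) * ‖(v : ℕ → ℂ) m‖^2)
      (2 * ‖T v‖^2 - Dsq α k v) := by
    have := ((hasSum_norm_sq_shift hT v).mul_left 2).sub (hasSum_Dsq (k := k) hα0 v)
    convert this using 2 with m
    · rfl
    · ring
  set g : ℕ → ℝ := fun m' => w α (m'+k) * ‖(z : ℕ → ℂ) m'‖^2 with hgdef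
  have hg : HasSum g (‖T z‖^2) := hasSum_norm_sq_shift hT z
  have hgnn : ∀ m', 0 ≤ g m' := fun m' => mul_nonneg (w_pos α (m'+k)).le (sq_nonneg _)
  have hR2sum : Summable (fun m => g (m+k)) :=
    hg.summable.comp_injective (shift_add_injective k)
  have hR2le : (∑' m, g (m+k)) ≤ ‖T z‖^2 := by
    rw [← hg.tsum_eq]
    exact hR2sum.tsum_le_tsum_of_inj (fun m : ℕ => m + k) (shift_add_injective k)
      (fun c _ => hgnn c) (fun m => le_rfl) hg.summable
  -- termwise
  have hterm : ∀ m, 2 * (w α (m+k) * (conj ((v : ℕ → ℂ) m) * (z : ℕ → ℂ) (m+k)).re)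
      ≤ (2 * w α (m+k) - w α (m+k)^2 / w α m) * ‖(v : ℕ → ℂ) m‖^2
        + g (m+k) := by
    intro m
    exact amgm _ _ _ _ _ (w_pos α (m+k)).le (w_c_nonneg hα0 k m) (w_pos α (m+k+k)).le
      (w_diamond hα1 hα0 k m)
  have hRsum : Summable (fun m => (2 * w α (m+k) - w α (m+k)^2 / w α m) * ‖(v : ℕ → ℂ) m‖^2
      + g (m+k)) := hR1.summable.add hR2sum
  have := hL.summable.tsum_le_tsum hterm hRsum
  rw [hL.tsum_eq] at this
  refine this.trans ?_
  rw [hR1.summable.tsum_add hR2sum, hR1.tsum_eq]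
  linarith [hR2le]

/-- Cauchy-Schwarz-type inequality for the pairing `⟪T v, T x⟫`. -/
lemma CSbound (hα0 : α ≤ 0) (hT : IsShiftBy α k T) (v x : Dspace α) :
    2 * (inner ℂ (T v) (T x) : ℂ).re ≤ Dsq α k v + ‖x‖^2 := by
  have hL0 := (hasSum_inner_shift2 hT v x).mapL Complex.reCLM
  have hL : HasSum (fun m => 2 * (w α (m+k) * (conj ((v : ℕ → ℂ) m) * (x : ℕ → ℂ) m).re))
      (2 * (inner ℂ (T v) (T x) : ℂ).re) := by
    refine HasSum.mul_left 2 ?_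
    convert hL0 using 2 with m
    · rfl
    · simp [Complex.smul_re]
    · simp
  have hR : HasSum (fun m => w α (m+k)^2 / w α m * ‖(v : ℕ → ℂ) m‖^2
      + w α m * ‖(x : ℕ → ℂ) m‖^2) (Dsq α k v + ‖x‖^2) :=
    (hasSum_Dsq hα0 v).add (hasSum_norm_sq x)
  have hterm : ∀ m, 2 * (w α (m+k) * (conj ((v : ℕ → ℂ) m) * (x : ℕ → ℂ) m).re)
      ≤ w α (m+k)^2 / w α m * ‖(v : ℕ → ℂ) m‖^2 + w α m * ‖(x : ℕ → ℂ) m‖^2 := by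
    intro m
    refine amgm _ _ _ _ _ (w_pos α (m+k)).le (div_nonneg (sq_nonneg _) (w_pos α m).le) (w_pos α m).le ?_
    rw [div_mul_eq_mul_div, mul_div_assoc, div_self (w_pos α m).ne', mul_one]
  have := hL.summable.tsum_le_tsum hterm hR.summable
  rw [hL.tsum_eq, hR.tsum_eq] at this
  exact this

end DirichletWandering

namespace DirichletWandering

variable {α : ℝ} {k : ℕ} {T : Dspace α →L[ℂ] Dspace α}

lemma sq_le_sq_norm {a b : ℝ} (ha : 0 ≤ a) (hb : 0 ≤ b) (h : a^2 ≤ b^2) : a ≤ b := by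
  nlinarith

lemma norm_T_le (hα0 : α ≤ 0) (hT : IsShiftBy α k T) (f : Dspace α) : ‖T f‖ ≤ ‖f‖ := by
  apply sq_le_sq_norm (norm_nonneg _) (norm_nonneg _)
  have h1 := hasSum_norm_sq_shift hT f
  have h2 := hasSum_norm_sq f
  rw [← h1.tsum_eq, ← h2.tsum_eq]
  apply h1.summable.tsum_le_tsum ?_ h2.summable
  intro m
  exact mul_le_mul_of_nonneg_right (w_antitone hα0 (Nat.le_add_right m k)) (sq_nonneg _)

lemma aux_inv2 (A B c : ℝ) (hA : 0 < A) (hB : 0 < B) (h : A ≤ c * B) : B⁻¹ ≤ c * A⁻¹ := by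
  rw [inv_eq_one_div, inv_eq_one_div, mul_one_div, div_le_div_iff₀ hB hA]
  nlinarith

lemma w_lower (hα0 : α ≤ 0) (m : ℕ) : w α m ≤ ((k:ℝ)+1)^(-α) * w α (m+k) := by
  have e1 : (((m+k:ℕ):ℝ) + 1) = (m:ℝ) + k + 1 := by push_cast; ring
  rw [w_eq_inv_rpow, w_eq_inv_rpow, e1]
  apply aux_inv2 _ _ _ (by positivity) (by positivity)
  have step1 : ((m:ℝ) + k + 1) ^ (-α) ≤ (((k:ℝ)+1) * ((m:ℝ)+1)) ^ (-α) := by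
    apply Real.rpow_le_rpow (by positivity) ?_ (by linarith)
    nlinarith [Nat.cast_nonneg (α := ℝ) m, Nat.cast_nonneg (α := ℝ) k]
  have step2 : (((k:ℝ)+1) * ((m:ℝ)+1)) ^ (-α) = ((k:ℝ)+1)^(-α) * ((m:ℝ)+1)^(-α) :=
    Real.mul_rpow (by positivity) (by positivity)
  rw [step2] at step1
  exact step1

lemma norm_T_lower (hα0 : α ≤ 0) (hT : IsShiftBy α k T) (f : Dspace α) :
    ‖f‖^2 ≤ ((k:ℝ)+1)^(-α) * ‖T f‖^2 := by
  have h1 := (hasSum_norm_sq_shift hT f).mul_left (((k:ℝ)+1)^(-α))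
  have h2 := hasSum_norm_sq f
  rw [← h1.tsum_eq, ← h2.tsum_eq]
  apply h2.summable.tsum_le_tsum ?_ h1.summable
  intro m
  rw [← mul_assoc]
  exact mul_le_mul_of_nonneg_right (w_lower hα0 m) (sq_nonneg _)

lemma vanish_of_chain (hk : 1 ≤ k) (hT : IsShiftBy α k T) (y : ℕ → Dspace α)
    (hchain : ∀ j, T (y (j+1)) = y j) : y 0 = 0 := by
  have key : ∀ n j m, m < n * k → ((y j : ℕ → ℂ)) m = 0 := by
    intro n
    induction n with
    | zero => intro j m hm; omega
    | succ n ih =>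
      intro j m hm
      have h1 : (y j : ℕ → ℂ) m = ((T (y (j+1)) : ℕ → ℂ)) m := by rw [hchain j]
      rw [h1, hT (y (j+1)) m]
      by_cases hmk : k ≤ m
      · simp only [hmk, if_true]
        refine ih (j+1) (m-k) ((Nat.sub_lt_iff_lt_add hmk).2 ?_)
        rw [Nat.succ_mul] at hm
        omega
      · simp [hmk]
  rw [Lp.eq_zero_iff_ae_eq_zero]
  have : ∀ m, ((y 0 : ℕ → ℂ)) m = 0 := by
    intro m
    refine key (m+1) 0 m ?_
    calc m < m + 1 := Nat.lt_succ_self m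
    _ ≤ (m+1) * k := Nat.le_mul_of_pos_right _ (by omega)
  filter_upwards with m using this m

end DirichletWandering

namespace DirichletWandering

lemma concave_seq_const (b : ℕ → ℝ) (h0 : ∀ j, 0 ≤ b j) (hmono : ∀ j, b (j+1) ≤ b j)
    (hconc : ∀ j, b j + b (j+2) ≤ 2 * b (j+1)) : ∀ j, b j = b 0 := by
  have hd : ∀ J i, b J - b (J+1) ≤ b (J+i) - b (J+i+1) := by
    intro J i
    induction i with
    | zero => simp
    | succ i ih =>
      have h := hconc (J+i)
      have e : J + (i+1) = J + i + 1 := by omega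
      rw [e]
      linarith
  have hsum : ∀ (J n : ℕ), (n:ℝ) * (b J - b (J+1)) ≤ b J - b (J+n) := by
    intro J n
    induction n with
    | zero => simp
    | succ n ih =>
      have h := hd J n
      have e : J + (n+1) = J + n + 1 := by omega
      rw [e]
      push_cast
      linarith
  have hstep : ∀ J, b (J+1) = b J := by
    intro J
    by_contra hne
    have hlt : 0 < b J - b (J+1) := by
      have := hmono J
      rcases lt_or_eq_of_le this with h | h
      · linarith
      · exact absurd h hne
    obtain ⟨n, hn⟩ := exists_nat_gt ((b J) / (b J - b (J+1)))
    have h2 := hsum J n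
    have h3 : b J - b (J+n) ≤ b J := by linarith [h0 (J+n)]
    have h4 : b J < (n:ℝ) * (b J - b (J+1)) := by
      rw [div_lt_iff₀ hlt] at hn
      linarith
    linarith
  intro j
  induction j with
  | zero => rfl
  | succ j ih => rw [hstep j, ih]

end DirichletWandering


/- For `k ≥ 1` and `α ∈ [-1,0]`, multiplication by `z^k` has the wandering subspace
property in the subspace `z^k D_α = {f ∈ D_α : a₀ = ⋯ = a_{k-1} = 0}`: every closed
`M_{z^k}`-invariant subspace `N ⊆ z^k D_α` satisfies `N = [N ⊖ z^k N]_{M_{z^k}}`. -/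
set_option maxHeartbeats 2000000 in
open DirichletWandering in
/-- For `k ≥ 1` and `α ∈ [-1,0]`, multiplication by `z^k` has the wandering subspace
property in the subspace `z^k D_α = {f ∈ D_α : a₀ = ⋯ = a_{k-1} = 0}`: every closed
`M_{z^k}`-invariant subspace `N ⊆ z^k D_α` satisfies `N = [N ⊖ z^k N]_{M_{z^k}}`. -/
theorem monomial_wandering_on_shifted_subspace
    (k : ℕ) (hk : 1 ≤ k) (α : ℝ) (hα : α ∈ Set.Icc (-1 : ℝ) 0)
    (T : Dspace α →L[ℂ] Dspace α) (hT : IsShiftBy α k T)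
    (N : Submodule ℂ (Dspace α)) (hNclosed : IsClosed (N : Set (Dspace α)))
    (hNsub : ∀ f ∈ N, ∀ n < k, (f : ℕ → ℂ) n = 0)
    (hNinv : ∀ f ∈ N, T f ∈ N) :
    N = invGen T ↑(wanderingPart T N) := by
  classical
  obtain ⟨hα1, hα0⟩ := hα
  haveI : CompleteSpace (↥N) := hNclosed.completeSpace_coe
  set E : Set (Dspace α) := ↑(wanderingPart T N) with hEdef
  set W : Submodule ℂ (Dspace α) := invGen T E with hWdef
  have hNmem : N ∈ {P : Submodule ℂ (Dspace α) |
      IsClosed (P : Set (Dspace α)) ∧ (∀ x ∈ P, T x ∈ P) ∧ E ⊆ P} := by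
    refine ⟨hNclosed, hNinv, ?_⟩
    intro x hx
    exact (Submodule.mem_inf.1 hx).1
  have hWN : W ≤ N := sInf_le hNmem
  have hWinv : ∀ x ∈ W, T x ∈ W := by
    intro x hx
    exact Submodule.mem_sInf.2 (fun p hp => hp.2.1 x ((Submodule.mem_sInf.1 hx) p hp))
  have hWE : E ⊆ (W : Set (Dspace α)) := by
    intro x hx
    exact Submodule.mem_sInf.2 (fun p hp => hp.2.2 hx)
  have hWclosed : IsClosed (W : Set (Dspace α)) := by
    rw [hWdef, invGen, Submodule.coe_sInf]
    exact isClosed_biInter (fun p hp => hp.1)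
  haveI : CompleteSpace (↥W) := hWclosed.completeSpace_coe
  -- the image submodule T N is closed
  set M' : Submodule ℂ (Dspace α) := Submodule.map (↑T : Dspace α →ₗ[ℂ] Dspace α) N with hM'def
  have hM'N : M' ≤ N := by
    rintro x ⟨u, hu, rfl⟩
    exact hNinv u hu
  have hM'closed : IsClosed (M' : Set (Dspace α)) := by
    have hrange : (M' : Set (Dspace α)) = Set.range (T.comp N.subtypeL) := by
      ext x
      constructor
      · rintro ⟨u, hu, rfl⟩
        exact ⟨⟨u, hu⟩, rfl⟩
      · rintro ⟨⟨u, hu⟩, rfl⟩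
        exact ⟨u, hu, rfl⟩
    rw [hrange]
    have hanti : AntilipschitzWith ((Real.sqrt (((k:ℝ)+1)^(-α))).toNNReal)
        (T.comp N.subtypeL) := by
      apply ContinuousLinearMap.antilipschitz_of_bound
      intro x
      rw [Real.coe_toNNReal _ (Real.sqrt_nonneg _)]
      have hb := norm_T_lower hα0 hT (N.subtypeL x)
      have hx : ‖x‖ = ‖N.subtypeL x‖ := rfl
      have hgx : ‖(T.comp N.subtypeL) x‖ = ‖T (N.subtypeL x)‖ := rfl
      rw [hx, hgx]
      set a := ‖N.subtypeL x‖
      set c := ‖T (N.subtypeL x)‖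
      have ha : 0 ≤ a := norm_nonneg _
      have hc : 0 ≤ c := norm_nonneg _
      have hC : (0:ℝ) ≤ ((k:ℝ)+1)^(-α) := by positivity
      have hsq : (Real.sqrt (((k:ℝ)+1)^(-α)) * c)^2 = ((k:ℝ)+1)^(-α) * c^2 := by
        rw [mul_pow, Real.sq_sqrt hC]
      apply sq_le_sq_norm ha (by positivity)
      rw [hsq]
      exact hb
    exact hanti.isClosed_range (T.comp N.subtypeL).uniformContinuous
  haveI : CompleteSpace (↥M') := hM'closed.completeSpace_coe
  -- orthogonal projection onto N
  set PN := Submodule.orthogonalProjection N with hPNdef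
  have hPN1 : ∀ (z x : Dspace α), x ∈ N → (inner ℂ x ((PN z : Dspace α)) : ℂ) = inner ℂ x z := by
    intro z x hx
    have h := Submodule.sub_starProjection_mem_orthogonal (K := N) z
    have h2 := (Submodule.mem_orthogonal N _).1 h x hx
    rw [inner_sub_right, sub_eq_zero] at h2
    exact h2.symm
  have hPN2 : ∀ (z x : Dspace α), x ∈ N → (inner ℂ ((PN z : Dspace α)) x : ℂ) = inner ℂ z x := by
    intro z x hx
    rw [← inner_conj_symm, hPN1 z x hx, inner_conj_symm]
  have hPNnorm : ∀ z : Dspace α, ‖(PN z : Dspace α)‖ ≤ ‖z‖ := by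
    intro z
    calc ‖(PN z : Dspace α)‖ = ‖PN z‖ := rfl
    _ ≤ ‖PN‖ * ‖z‖ := PN.le_opNorm z
    _ ≤ 1 * ‖z‖ := mul_le_mul_of_nonneg_right (Submodule.orthogonalProjection_norm_le N) (norm_nonneg z)
    _ = ‖z‖ := one_mul _
  set A := ContinuousLinearMap.adjoint T with hAdef
  have hTnorm : ‖T‖ ≤ 1 := T.opNorm_le_bound zero_le_one
    (fun f => by rw [one_mul]; exact norm_T_le hα0 hT f)
  have hAnorm : ∀ z, ‖A z‖ ≤ ‖z‖ := by
    intro z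
    have hAn : ‖A‖ = ‖T‖ := by
      rw [hAdef]
      exact LinearIsometryEquiv.norm_map ContinuousLinearMap.adjoint T
    calc ‖A z‖ ≤ ‖A‖ * ‖z‖ := A.le_opNorm z
    _ ≤ 1 * ‖z‖ := by
        rw [hAn]
        exact mul_le_mul_of_nonneg_right hTnorm (norm_nonneg z)
    _ = ‖z‖ := one_mul _
  -- key step: the orthogonal complement of W inside N is trivial
  have key : ∀ y₀ : Dspace α, y₀ ∈ N → (∀ x ∈ W, (inner ℂ x y₀ : ℂ) = 0) → y₀ = 0 := by
    intro y₀ hy₀N hy₀W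
    set g : Dspace α → Dspace α := fun v => ((PN (A v)) : Dspace α) with hgdef
    set Y : ℕ → Dspace α := fun j => g^[j] y₀ with hYdef
    have hY0 : Y 0 = y₀ := rfl
    have hYsucc : ∀ j, Y (j+1) = (PN (A (Y j)) : Dspace α) := by
      intro j
      rw [hYdef]
      simp only [Function.iterate_succ_apply']
      rfl
    have hYN : ∀ j, Y j ∈ N := by
      intro j
      cases j with
      | zero => exact hy₀N
      | succ j => rw [hYsucc]; exact SetLike.coe_mem _
    have hYW : ∀ j, ∀ x ∈ W, (inner ℂ x (Y j) : ℂ) = 0 := by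
      intro j
      induction j with
      | zero => exact hy₀W
      | succ j ih =>
        intro x hx
        rw [hYsucc j, hPN1 _ x (hWN hx), hAdef, ContinuousLinearMap.adjoint_inner_right]
        exact ih (T x) (hWinv x hx)
    have hYu : ∀ j, ∃ u, u ∈ N ∧ T u = Y j := by
      intro j
      set QM := Submodule.orthogonalProjection M' with hQMdef
      set r : Dspace α := Y j - (QM (Y j) : Dspace α) with hrdef
      have hrN : r ∈ N := N.sub_mem (hYN j) (hM'N (SetLike.coe_mem (QM (Y j))))
      have hrO : r ∈ M'ᗮ := Submodule.sub_starProjection_mem_orthogonal (K := M') (Y j)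
      have hrwp : r ∈ wanderingPart T N := Submodule.mem_inf.2 ⟨hrN, hrO⟩
      have h1 : (inner ℂ r (Y j) : ℂ) = 0 := hYW j r (hWE hrwp)
      have h2 : (inner ℂ r ((QM (Y j)) : Dspace α) : ℂ) = 0 := by
        have := (Submodule.mem_orthogonal M' r).1 hrO _ (SetLike.coe_mem (QM (Y j)))
        rwa [inner_eq_zero_symm] at this
      have h3 : (inner ℂ r r : ℂ) = 0 := by
        calc (inner ℂ r r : ℂ) = inner ℂ r (Y j - (QM (Y j) : Dspace α)) := by rw [← hrdef]
        _ = inner ℂ r (Y j) - inner ℂ r ((QM (Y j)) : Dspace α) := inner_sub_right _ _ _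
        _ = 0 := by rw [h1, h2, sub_zero]
      have hr0 : r = 0 := inner_self_eq_zero.1 h3
      have hYQ : Y j = (QM (Y j) : Dspace α) := by
        rw [hrdef] at hr0
        rwa [sub_eq_zero] at hr0
      have hmem : Y j ∈ M' := hYQ ▸ SetLike.coe_mem _
      obtain ⟨u, hu, hTu⟩ := Submodule.mem_map.1 hmem
      refine ⟨u, hu, ?_⟩
      rwa [ContinuousLinearMap.coe_coe] at hTu
    choose u huN hTu using hYu
    set b : ℕ → ℝ := fun j => ‖Y j‖^2 with hbdef
    have hb0 : ∀ j, 0 ≤ b j := fun j => sq_nonneg _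
    have hbmono : ∀ j, b (j+1) ≤ b j := by
      intro j
      have h1 : ‖Y (j+1)‖ ≤ ‖Y j‖ := by
        rw [hYsucc]
        exact (hPNnorm _).trans (hAnorm _)
      exact pow_le_pow_left₀ (norm_nonneg _) h1 2
    have hinner1 : ∀ j, (inner ℂ (T (u (j+1))) (u j) : ℂ) = ((b j : ℝ) : ℂ) := by
      intro j
      rw [hTu (j+1), hYsucc j, hPN2 _ _ (huN j), hAdef,
        ContinuousLinearMap.adjoint_inner_left, hTu j, inner_self_eq_norm_sq_to_K]
      norm_cast
    have hDbound : ∀ j, b (j+2) ≤ Dsq α k (u (j+1)) := by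
      intro j
      have e1 : (inner ℂ (T (u (j+1))) (T (Y (j+2))) : ℂ) = ((b (j+2) : ℝ) : ℂ) := by
        rw [hTu (j+1)]
        calc (inner ℂ (Y (j+1)) (T (Y (j+2))) : ℂ)
            = inner ℂ (A (Y (j+1))) (Y (j+2)) := by
              rw [hAdef, ContinuousLinearMap.adjoint_inner_left]
        _ = inner ℂ ((PN (A (Y (j+1))) : Dspace α)) (Y (j+2)) :=
              (hPN2 _ _ (hYN (j+2))).symm
        _ = inner ℂ (Y (j+2)) (Y (j+2)) := by rw [← hYsucc (j+1)]
        _ = ((b (j+2) : ℝ) : ℂ) := by rw [inner_self_eq_norm_sq_to_K]; norm_cast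
      have hcs := CSbound hα0 hT (u (j+1)) (Y (j+2))
      rw [e1] at hcs
      simp only [Complex.ofReal_re] at hcs
      have : b (j+2) = ‖Y (j+2)‖^2 := rfl
      linarith
    have hbconc : ∀ j, b j + b (j+2) ≤ 2 * b (j+1) := by
      intro j
      have hf3 := F3 hα1 hα0 hT (u (j+1)) (u j)
      rw [hinner1 j] at hf3
      simp only [Complex.ofReal_re] at hf3
      rw [hTu (j+1), hTu j] at hf3
      have hD := hDbound j
      have e1 : ‖Y (j+1)‖^2 = b (j+1) := rfl
      have e2 : ‖Y j‖^2 = b j := rfl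
      linarith
    have hbconst := concave_seq_const b hb0 hbmono hbconc
    have hchain : ∀ j, T (Y (j+1)) = Y j := by
      intro j
      have h1 : (inner ℂ (Y j) (T (Y (j+1))) : ℂ) = ((b 0 : ℝ) : ℂ) := by
        calc (inner ℂ (Y j) (T (Y (j+1))) : ℂ)
            = inner ℂ (A (Y j)) (Y (j+1)) := by
              rw [hAdef, ContinuousLinearMap.adjoint_inner_left]
        _ = inner ℂ ((PN (A (Y j)) : Dspace α)) (Y (j+1)) := (hPN2 _ _ (hYN (j+1))).symm
        _ = inner ℂ (Y (j+1)) (Y (j+1)) := by rw [← hYsucc j]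
        _ = ((b (j+1) : ℝ) : ℂ) := by rw [inner_self_eq_norm_sq_to_K]; norm_cast
        _ = ((b 0 : ℝ) : ℂ) := by rw [hbconst (j+1)]
      have hre : (inner ℂ (T (Y (j+1))) (Y j) : ℂ).re = b 0 := by
        rw [← inner_conj_symm, h1]
        simp
      have hnorm : ‖T (Y (j+1))‖^2 ≤ b 0 := by
        have h2 : ‖T (Y (j+1))‖ ≤ ‖Y (j+1)‖ := norm_T_le hα0 hT _
        have h3 : ‖Y (j+1)‖^2 = b 0 := hbconst (j+1)
        have := pow_le_pow_left₀ (norm_nonneg _) h2 2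
        linarith
      have hexp := norm_sub_sq (𝕜 := ℂ) (T (Y (j+1))) (Y j)
      have hzero : ‖T (Y (j+1)) - Y j‖^2 ≤ 0 := by
        rw [hexp, RCLike.re_to_complex, hre]
        have hbj : ‖Y j‖^2 = b 0 := hbconst j
        linarith
      have hnz : ‖T (Y (j+1)) - Y j‖ = 0 := by
        have := norm_nonneg (T (Y (j+1)) - Y j)
        nlinarith
      exact sub_eq_zero.1 (norm_eq_zero.1 hnz)
    have hv := vanish_of_chain hk hT Y hchain
    rwa [hY0] at hv
  -- conclude
  refine (le_antisymm ?_ hWN)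
  intro x hx
  set Pw := Submodule.orthogonalProjection W with hPwdef
  have hy₀N : x - (Pw x : Dspace α) ∈ N := N.sub_mem hx (hWN (SetLike.coe_mem _))
  have hy₀W : ∀ v ∈ W, (inner ℂ v (x - (Pw x : Dspace α)) : ℂ) = 0 := fun v hv =>
    (Submodule.mem_orthogonal W _).1 (Submodule.sub_starProjection_mem_orthogonal (K := W) x) v hv
  have h0 := key _ hy₀N hy₀W
  have hxeq : x = (Pw x : Dspace α) := by rwa [sub_eq_zero] at h0
  rw [hxeq]
  exact SetLike.coe_mem _
end

section
/- Let α ∈ [−1, 0] and set ω_n = (n+1)^α for n ≥ 0. Then ω_1 ≥ 1/2, and ω_n(ω_{n−1} + ω_{n+1}) ≤ 2 ω_{n−1} ω_{n+1} for every integer n ≥ 1. Consequently the shift operator M_z on D_α satisfies Shimorin's inequality ‖f + z g‖_α² ≤ 2(‖z f‖_α² + ‖g‖_α²) for all f, g ∈ D_α. -/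
open MeasureTheory

/-! ### Auxiliary definitions and lemmas -/


noncomputable def Fsq (h : ℕ → ℂ) (n : ℕ) : ENNReal := (‖h n‖₊ : ENNReal) ^ (2:ℝ)

noncomputable def wgt (α : ℝ) (n : ℕ) : ENNReal := ENNReal.ofReal ((n + 1 : ℝ) ^ α)

lemma dirichletMeasure_def (α : ℝ) :
    dirichletMeasure α
      = Measure.count.withDensity (fun n : ℕ => ENNReal.ofReal ((n + 1 : ℝ) ^ α)) := by
  with_unfolding_all rfl

lemma lintegral_dirichlet (α : ℝ) (F : ℕ → ENNReal) :
    ∫⁻ n, F n ∂(dirichletMeasure α) = ∑' n, F n * wgt α n := by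
  rw [dirichletMeasure_def,
    lintegral_withDensity_eq_lintegral_mul _ (by measurability) (by measurability),
    lintegral_count]
  simp [wgt, mul_comm]

lemma eLpNorm_eq (α : ℝ) (h : Dspace α) :
    eLpNorm (h : ℕ → ℂ) 2 (dirichletMeasure α)
      = (∑' n, Fsq (h : ℕ → ℂ) n * wgt α n) ^ ((1:ℝ)/2) := by
  have h2 : ((2:ENNReal)).toReal = (2:ℝ) := by norm_num
  rw [eLpNorm_eq_lintegral_rpow_enorm_toReal (by norm_num) (by norm_num), h2,
    lintegral_dirichlet]
  rfl

lemma sum_ne_top (α : ℝ) (h : Dspace α) :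
    (∑' n, Fsq (h : ℕ → ℂ) n * wgt α n) ≠ ⊤ := by
  intro hc
  have hne : eLpNorm (h : ℕ → ℂ) 2 (dirichletMeasure α) ≠ ⊤ := Lp.eLpNorm_ne_top h
  rw [eLpNorm_eq, hc, ENNReal.top_rpow_of_pos (by norm_num)] at hne
  exact hne rfl

lemma norm_sq_eq (α : ℝ) (h : Dspace α) :
    ‖h‖ ^ 2 = (∑' n, Fsq (h : ℕ → ℂ) n * wgt α n).toReal := by
  rw [Lp.norm_def, eLpNorm_eq, ← ENNReal.toReal_rpow]
  have : (0:ℝ) ≤ (∑' n, Fsq (h : ℕ → ℂ) n * wgt α n).toReal := ENNReal.toReal_nonneg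
  rw [← Real.rpow_natCast (_ ^ ((1:ℝ)/2)) 2, ← Real.rpow_mul this]
  norm_num

lemma tsum_norm_congr (α : ℝ) (h : Dspace α) (φ : ℕ → ℂ)
    (hae : (h : ℕ → ℂ) =ᵐ[dirichletMeasure α] φ) :
    ∑' n, Fsq (h : ℕ → ℂ) n * wgt α n = ∑' n, Fsq φ n * wgt α n := by
  rw [← lintegral_dirichlet, ← lintegral_dirichlet]
  exact lintegral_congr_ae (hae.mono fun n hn => by rw [Fsq, hn]; rfl)

lemma tsum_shift (α : ℝ) (φ : ℕ → ℂ) :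
    ∑' n, Fsq (fun n => if 1 ≤ n then φ (n-1) else 0) n * wgt α n
      = ∑' n, Fsq φ n * wgt α (n+1) := by
  rw [← Function.Injective.tsum_eq Nat.succ_injective
      (f := fun n => Fsq (fun n => if 1 ≤ n then φ (n-1) else 0) n * wgt α n) ?_]
  · exact tsum_congr fun m => by simp [Fsq, Nat.succ_eq_add_one]
  · intro x hx
    cases x with
    | zero =>
      exfalso
      simp [Function.mem_support, Fsq, ENNReal.zero_rpow_of_pos] at hx
    | succ m => exact ⟨m, rfl⟩

/-! ### Real inequalities -/

lemma half_le_rpow {α : ℝ} (hα1 : -1 ≤ α) : 1 / 2 ≤ ((1 : ℝ) + 1) ^ α := by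
  have h := Real.rpow_le_rpow_of_exponent_le (one_le_two) hα1
  rw [Real.rpow_neg_one] at h
  norm_num at h ⊢
  linarith

lemma mid_ineq {α : ℝ} (hα1 : -1 ≤ α) (hα2 : α ≤ 0) {x : ℝ} (hx : 0 < x) :
    (x + 1) ^ α * (x ^ α + (x + 2) ^ α) ≤ 2 * x ^ α * (x + 2) ^ α := by
  have hβ0 : 0 ≤ -α := by linarith
  have hβ1 : -α ≤ 1 := by linarith
  have hcon := (Real.concaveOn_rpow hβ0 hβ1).2 (Set.mem_Ici.2 hx.le)
      (Set.mem_Ici.2 (by linarith : (0:ℝ) ≤ x + 2)) (by norm_num : (0:ℝ) ≤ 1/2)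
      (by norm_num : (0:ℝ) ≤ 1/2) (by norm_num)
  simp only [smul_eq_mul] at hcon
  have hmid : (1/2 : ℝ) * x + (1/2 : ℝ) * (x + 2) = x + 1 := by ring
  rw [hmid] at hcon
  have key : x ^ (-α) + (x + 2) ^ (-α) ≤ 2 * (x + 1) ^ (-α) := by linarith
  have hA : 0 < x ^ (-α) := Real.rpow_pos_of_pos hx _
  have hB : 0 < (x + 1) ^ (-α) := Real.rpow_pos_of_pos (by linarith) _
  have hC : 0 < (x + 2) ^ (-α) := Real.rpow_pos_of_pos (by linarith) _
  have e1 : x ^ α = (x ^ (-α))⁻¹ := by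
    simpa using Real.rpow_neg hx.le (-α)
  have e2 : (x + 1) ^ α = ((x + 1) ^ (-α))⁻¹ := by
    simpa using Real.rpow_neg (by linarith : (0:ℝ) ≤ x + 1) (-α)
  have e3 : (x + 2) ^ α = ((x + 2) ^ (-α))⁻¹ := by
    simpa using Real.rpow_neg (by linarith : (0:ℝ) ≤ x + 2) (-α)
  rw [e1, e2, e3]
  have h1 : ((x+1)^(-α))⁻¹ * ((x^(-α))⁻¹ + ((x+2)^(-α))⁻¹)
      = (x^(-α) + (x+2)^(-α)) / (x^(-α) * (x+1)^(-α) * (x+2)^(-α)) := by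
    field_simp; ring
  have h2 : 2 * (x^(-α))⁻¹ * ((x+2)^(-α))⁻¹
      = (2*(x+1)^(-α)) / (x^(-α) * (x+1)^(-α) * (x+2)^(-α)) := by
    field_simp
  rw [h1, h2, div_le_div_iff₀ (by positivity) (by positivity)]
  nlinarith [key, mul_pos hA (mul_pos hB hC), mul_pos hA hC, mul_pos hA hB, mul_pos hB hC]

lemma key_quad {p q r x y : ℝ} (hp : 0 < p) (hq : 0 < q) (hr : 0 < r)
    (h : q * (p + r) ≤ 2 * p * r) (hx : 0 ≤ x) (hy : 0 ≤ y) :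
    q * (x + y) ^ 2 ≤ 2 * r * x ^ 2 + 2 * p * y ^ 2 := by
  have h1 := mul_le_mul_of_nonneg_right h (sq_nonneg (x + y))
  have hpr : 0 < p + r := by linarith
  nlinarith [sq_nonneg (r * x - p * y), h1, hpr]

lemma fsq_eq_ofReal (z : ℂ) : (‖z‖₊ : ENNReal) ^ (2:ℝ) = ENNReal.ofReal (‖z‖ ^ 2) := by
  rw [← enorm_eq_nnnorm, ← ofReal_norm, ENNReal.ofReal_rpow_of_nonneg (norm_nonneg z) (by norm_num),
    Real.rpow_two]

lemma key_ennreal {p q r : ℝ} (hp : 0 < p) (hq : 0 < q) (hr : 0 < r)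
    (h : q * (p + r) ≤ 2 * p * r) (a b : ℂ) :
    (‖a + b‖₊ : ENNReal) ^ (2:ℝ) * ENNReal.ofReal q
      ≤ 2 * ((‖a‖₊ : ENNReal) ^ (2:ℝ) * ENNReal.ofReal r)
        + 2 * ((‖b‖₊ : ENNReal) ^ (2:ℝ) * ENNReal.ofReal p) := by
  have hreal : ‖a + b‖ ^ 2 * q ≤ 2 * (‖a‖ ^ 2 * r) + 2 * (‖b‖ ^ 2 * p) := by
    have h1 := key_quad hp hq hr h (norm_nonneg a) (norm_nonneg b)
    have h2 : ‖a + b‖ ^ 2 ≤ (‖a‖ + ‖b‖) ^ 2 := by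
      have := norm_add_le a b
      nlinarith [norm_nonneg (a+b), norm_nonneg a, norm_nonneg b]
    nlinarith [hq.le]
  rw [fsq_eq_ofReal, fsq_eq_ofReal, fsq_eq_ofReal,
    ← ENNReal.ofReal_mul (by positivity), ← ENNReal.ofReal_mul (by positivity),
    ← ENNReal.ofReal_mul (by positivity),
    show (2:ENNReal) = ENNReal.ofReal 2 by simp,
    ← ENNReal.ofReal_mul (by norm_num), ← ENNReal.ofReal_mul (by norm_num),
    ← ENNReal.ofReal_add (by positivity) (by positivity)]
  exact ENNReal.ofReal_le_ofReal hreal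


/-- For `α ∈ [-1,0]` and `ωₙ = (n+1)^α`: `ω₁ ≥ 1/2`, `ωₙ(ω_{n-1}+ω_{n+1}) ≤ 2ω_{n-1}ω_{n+1}`
for `n ≥ 1`, and consequently the shift `M_z` on `D_α` satisfies Shimorin's inequality
`‖f + zg‖² ≤ 2(‖zf‖² + ‖g‖²)`. -/
theorem shift_satisfies_shimorin
    (α : ℝ) (hα : α ∈ Set.Icc (-1 : ℝ) 0) :
    (1 / 2 ≤ ((1 : ℝ) + 1) ^ α) ∧
    (∀ n : ℕ, 1 ≤ n →
      ((n : ℝ) + 1) ^ α * ((n : ℝ) ^ α + ((n : ℝ) + 2) ^ α) ≤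
        2 * (n : ℝ) ^ α * ((n : ℝ) + 2) ^ α) ∧
    (∀ T : Dspace α →L[ℂ] Dspace α, IsShiftBy α 1 T →
      ∀ f g : Dspace α, ‖f + T g‖ ^ 2 ≤ 2 * (‖T f‖ ^ 2 + ‖g‖ ^ 2)) := by
  obtain ⟨hα1, hα2⟩ := hα
  refine ⟨half_le_rpow hα1, fun n hn => ?_, fun T hT f g => ?_⟩
  · have hx : (0:ℝ) < n := by
      have : (1:ℝ) ≤ n := by exact_mod_cast hn
      linarith
    exact mid_ineq hα1 hα2 hx
  · -- notation
    set φf : ℕ → ℂ := (f : ℕ → ℂ) with hφf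
    set φg : ℕ → ℂ := (g : ℕ → ℂ) with hφg
    -- a.e. identification of the coefficient functions
    have haefg : ((f + T g : Dspace α) : ℕ → ℂ)
        =ᵐ[dirichletMeasure α] fun n => φf n + (if 1 ≤ n then φg (n-1) else 0) := by
      refine (Lp.coeFn_add f (T g)).trans (Filter.Eventually.of_forall fun n => ?_)
      simp [hT g n, hφf, hφg]
    have haeTf : ((T f : Dspace α) : ℕ → ℂ)
        =ᵐ[dirichletMeasure α] fun n => (if 1 ≤ n then φf (n-1) else 0) :=
      Filter.Eventually.of_forall fun n => hT f n
    -- the three sums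
    have e1 : (∑' n, Fsq ((f + T g : Dspace α) : ℕ → ℂ) n * wgt α n)
        = ∑' n, Fsq (fun n => φf n + (if 1 ≤ n then φg (n-1) else 0)) n * wgt α n :=
      tsum_norm_congr α _ _ haefg
    have e2 : (∑' n, Fsq ((T f : Dspace α) : ℕ → ℂ) n * wgt α n)
        = ∑' n, Fsq φf n * wgt α (n+1) :=
      (tsum_norm_congr α _ _ haeTf).trans (tsum_shift α φf)
    -- termwise bound
    have hterm : ∀ n : ℕ,
        Fsq (fun n => φf n + (if 1 ≤ n then φg (n-1) else 0)) n * wgt α n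
          ≤ 2 * (Fsq φf n * wgt α (n+1))
            + (if 1 ≤ n then 2 * (Fsq φg (n-1) * wgt α (n-1)) else 0) := by
      intro n
      cases n with
      | zero =>
        rw [if_neg (by norm_num : ¬ (1 ≤ (0:ℕ))), add_zero]
        have hw0 : wgt α 0 = 1 := by
          simp [wgt, Real.one_rpow]
        have hw1 : (1 : ENNReal) ≤ 2 * wgt α 1 := by
          rw [wgt, show (2:ENNReal) = ENNReal.ofReal 2 by simp,
            ← ENNReal.ofReal_mul (by norm_num), show (1:ENNReal) = ENNReal.ofReal 1 by simp]
          refine ENNReal.ofReal_le_ofReal ?_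
          have := half_le_rpow hα1
          norm_num at this ⊢
          linarith
        calc Fsq (fun n => φf n + (if 1 ≤ n then φg (n-1) else 0)) 0 * wgt α 0
            = Fsq φf 0 * 1 := by rw [hw0]; congr 1; simp [Fsq]
          _ ≤ Fsq φf 0 * (2 * wgt α 1) := mul_le_mul_right hw1 _
          _ = 2 * (Fsq φf 0 * wgt α (0+1)) := by ring
      | succ m =>
        have hx : (0:ℝ) < (m:ℝ) + 1 := by positivity
        have hkey := mid_ineq hα1 hα2 hx
        have hp : (0:ℝ) < ((m:ℝ)+1) ^ α := Real.rpow_pos_of_pos hx _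
        have hq : (0:ℝ) < ((m:ℝ)+1+1) ^ α := Real.rpow_pos_of_pos (by linarith) _
        have hr : (0:ℝ) < ((m:ℝ)+1+2) ^ α := Real.rpow_pos_of_pos (by linarith) _
        have h := key_ennreal hp hq hr
          (by rw [show (m:ℝ)+1+1 = ((m:ℝ)+1)+1 by ring, show (m:ℝ)+1+2 = ((m:ℝ)+1)+2 by ring]
              exact hkey) (φf (m+1)) (φg m)
        simp only [if_pos (Nat.succ_le_succ (Nat.zero_le m)), Nat.add_sub_cancel]
        calc Fsq (fun n => φf n + (if 1 ≤ n then φg (n-1) else 0)) (m+1) * wgt α (m+1)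
            = (‖φf (m+1) + φg m‖₊ : ENNReal) ^ (2:ℝ)
                * ENNReal.ofReal (((m:ℝ)+1+1) ^ α) := by
              congr 1
              · simp only [wgt]; congr 1; push_cast; ring
          _ ≤ 2 * ((‖φf (m+1)‖₊ : ENNReal) ^ (2:ℝ) * ENNReal.ofReal (((m:ℝ)+1+2) ^ α))
                + 2 * ((‖φg m‖₊ : ENNReal) ^ (2:ℝ) * ENNReal.ofReal (((m:ℝ)+1) ^ α)) := h
          _ = 2 * (Fsq φf (m+1) * wgt α (m+1+1)) + 2 * (Fsq φg m * wgt α m) := by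
              have w1 : ENNReal.ofReal (((m:ℝ)+1+2) ^ α) = wgt α (m+1+1) := by
                simp only [wgt]; congr 1; push_cast; ring
              have w2 : ENNReal.ofReal (((m:ℝ)+1) ^ α) = wgt α m := rfl
              rw [w1, w2]; rfl
    -- sum the bound
    have hsum : (∑' n, Fsq (fun n => φf n + (if 1 ≤ n then φg (n-1) else 0)) n * wgt α n)
        ≤ 2 * ((∑' n, Fsq φf n * wgt α (n+1)) + ∑' n, Fsq φg n * wgt α n) := by
      calc (∑' n, Fsq (fun n => φf n + (if 1 ≤ n then φg (n-1) else 0)) n * wgt α n)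
          ≤ ∑' n, (2 * (Fsq φf n * wgt α (n+1))
              + (if 1 ≤ n then 2 * (Fsq φg (n-1) * wgt α (n-1)) else 0)) :=
            ENNReal.tsum_le_tsum hterm
        _ = (∑' n, 2 * (Fsq φf n * wgt α (n+1)))
              + ∑' n, (if 1 ≤ n then 2 * (Fsq φg (n-1) * wgt α (n-1)) else 0) :=
            ENNReal.tsum_add
        _ = 2 * (∑' n, Fsq φf n * wgt α (n+1))
              + 2 * ∑' n, Fsq φg n * wgt α n := by
            rw [ENNReal.tsum_mul_left]
            congr 1
            rw [← Function.Injective.tsum_eq Nat.succ_injective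
              (f := fun n => (if 1 ≤ n then 2 * (Fsq φg (n-1) * wgt α (n-1)) else 0)) ?_,
              ← ENNReal.tsum_mul_left]
            · exact tsum_congr fun m => by simp
            · intro x hx
              cases x with
              | zero =>
                exfalso
                simp [Function.mem_support] at hx
              | succ m => exact ⟨m, rfl⟩
        _ = 2 * ((∑' n, Fsq φf n * wgt α (n+1)) + ∑' n, Fsq φg n * wgt α n) := by ring
    -- convert back to real norms
    have hfin2 : (∑' n, Fsq φf n * wgt α (n+1)) ≠ ⊤ := e2 ▸ sum_ne_top α (T f)
    have hfin3 : (∑' n, Fsq φg n * wgt α n) ≠ ⊤ := sum_ne_top α g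
    rw [norm_sq_eq, norm_sq_eq, norm_sq_eq, e1, e2]
    calc (∑' n, Fsq (fun n => φf n + (if 1 ≤ n then φg (n-1) else 0)) n * wgt α n).toReal
        ≤ (2 * ((∑' n, Fsq φf n * wgt α (n+1)) + ∑' n, Fsq φg n * wgt α n)).toReal := by
          refine ENNReal.toReal_mono ?_ hsum
          exact ENNReal.mul_ne_top (by norm_num) (ENNReal.add_ne_top.2 ⟨hfin2, hfin3⟩)
      _ = 2 * ((∑' n, Fsq φf n * wgt α (n+1)).toReal + (∑' n, Fsq φg n * wgt α n).toReal) := by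
          rw [ENNReal.toReal_mul, ENNReal.toReal_add hfin2 hfin3]
          norm_num
end
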